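/- Let ρ be a self-approaching drawing in ℝ² of a finite tree T. Then for every edge {u,v} of T and every edge {a,b} of T with {a,b} ≠ {u,v}, the closed segment [ρ(a), ρ(b)] is disjoint from the open slab slab(ρ(u), ρ(v)). In particular, no vertex image ρ(w) lies in slab(ρ(u), ρ(v)). -/

import Mathlib

/-- The point of the polygonal path `p 0, p 1, …` lying on segment `i`
(from `p i` to `p (i+1)`) at fraction `s ∈ [0,1]`. -/
noncomputable def polyPt (p : ℕ → EuclideanSpace ℝ (Fin 2)) (i : ℕ) (s : ℝ) :
    EuclideanSpace ℝ (Fin 2) :=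
  (1 - s) • p i + s • p (i + 1)

/-- `(i, s)` comes no later than `(j, t)` in the lexicographic order on parameters
of points of a polygonal path. -/
def ParamLE (i : ℕ) (s : ℝ) (j : ℕ) (t : ℝ) : Prop :=
  i < j ∨ (i = j ∧ s ≤ t)

/-- The polygonal path on the points `p 0, …, p m` (with `m` segments, indexed
`0, …, m-1`) is self-approaching: for any three of its points `a, b, c` in order
along the path, `dist a c ≥ dist b c`. -/
def IsSelfApproachingPoly (m : ℕ) (p : ℕ → EuclideanSpace ℝ (Fin 2)) : Prop :=
  ∀ (i j k : ℕ) (s t u : ℝ), i < m → j < m → k < m →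
    s ∈ Set.Icc (0 : ℝ) 1 → t ∈ Set.Icc (0 : ℝ) 1 → u ∈ Set.Icc (0 : ℝ) 1 →
    ParamLE i s j t → ParamLE j t k u →
    dist (polyPt p j t) (polyPt p k u) ≤ dist (polyPt p i s) (polyPt p k u)

/-- The polygonal path on the points `p 0, …, p m` has increasing chords: for any
four of its points `a, b, c, d` in order along the path, `dist a d ≥ dist b c`. -/
def IsIncreasingChordsPoly (m : ℕ) (p : ℕ → EuclideanSpace ℝ (Fin 2)) : Prop :=
  ∀ (i j k l : ℕ) (s t u v : ℝ), i < m → j < m → k < m → l < m →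
    s ∈ Set.Icc (0 : ℝ) 1 → t ∈ Set.Icc (0 : ℝ) 1 → u ∈ Set.Icc (0 : ℝ) 1 →
    v ∈ Set.Icc (0 : ℝ) 1 →
    ParamLE i s j t → ParamLE j t k u → ParamLE k u l v →
    dist (polyPt p j t) (polyPt p k u) ≤ dist (polyPt p i s) (polyPt p l v)

/-- A straight-line drawing `ρ` of a graph `G` is self-approaching if `ρ` is injective
and for every ordered pair of distinct vertices `(s, t)` there is a path from `s` to `t`
in `G` whose polygonal drawing under `ρ` is self-approaching. -/
def IsSelfApproachingDrawing {V : Type*} (G : SimpleGraph V)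
    (ρ : V → EuclideanSpace ℝ (Fin 2)) : Prop :=
  Function.Injective ρ ∧
  ∀ s t : V, s ≠ t → ∃ w : G.Walk s t, w.IsPath ∧
    IsSelfApproachingPoly w.length (fun n => ρ (w.getVert n))

/-- The open slab `slab u v` for distinct `u, v`: the open strip strictly between the
two lines through `u` and through `v` perpendicular to the segment `uv`. -/
def slab (u v : EuclideanSpace ℝ (Fin 2)) : Set (EuclideanSpace ℝ (Fin 2)) :=
  {x | 0 < (inner ℝ (x - u) (v - u) : ℝ) ∧ 0 < (inner ℝ (x - v) (u - v) : ℝ)}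

/-- Geometric core: if the distance from `W` to the moving point on segment `A→B`
is minimized at the endpoint `B`, then `W` is beyond the line through `B`
perpendicular to `AB`. -/
lemma innerG {E : Type*} [NormedAddCommGroup E] [InnerProductSpace ℝ E]
    (A B W : E) (h : ∀ s ∈ Set.Icc (0:ℝ) 1, dist B W ≤ dist ((1-s) • A + s • B) W) :
    (inner ℝ (W - B) (A - B) : ℝ) ≤ 0 := by
  set c : ℝ := inner ℝ (W - B) (A - B) with hc
  set K : ℝ := ‖A - B‖ ^ 2 with hK
  have key : ∀ r ∈ Set.Icc (0:ℝ) 1, 2 * r * c ≤ r ^ 2 * K := by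
    intro r hr
    have hs : (1 : ℝ) - r ∈ Set.Icc (0:ℝ) 1 := ⟨by linarith [hr.2], by linarith [hr.1]⟩
    have h1 := h (1 - r) hs
    have hpt : (1 - (1 - r)) • A + (1 - r) • B = ((B - W) + r • (A - B)) + W := by
      module
    rw [hpt] at h1
    have h2 : ‖B - W‖ ≤ ‖(B - W) + r • (A - B)‖ := by
      simpa [dist_eq_norm, add_sub_cancel_right] using h1
    have h3 : ‖B - W‖ ^ 2 ≤ ‖(B - W) + r • (A - B)‖ ^ 2 := by
      have := norm_nonneg (B - W)
      nlinarith [norm_nonneg ((B - W) + r • (A - B))]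
    have h4 : ‖(B - W) + r • (A - B)‖ ^ 2
        = ‖B - W‖ ^ 2 + 2 * (r * (-c)) + r ^ 2 * K := by
      rw [norm_add_sq_real, real_inner_smul_right]
      have : (inner ℝ (B - W) (A - B) : ℝ) = -c := by
        rw [hc, ← inner_neg_left, neg_sub]
      rw [this, norm_smul, Real.norm_eq_abs, mul_pow, sq_abs, hK]
    nlinarith [h3, h4]
  by_contra hcon
  push_neg at hcon
  have hK0 : 0 ≤ K := by positivity
  rcases eq_or_lt_of_le hK0 with hK1 | hK1
  · have := key 1 ⟨zero_le_one, le_refl 1⟩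
    rw [← hK1] at this
    nlinarith
  · set r : ℝ := min 1 (c / K) with hr
    have hr0 : 0 < r := lt_min one_pos (div_pos hcon hK1)
    have hr1 : r ≤ 1 := min_le_left _ _
    have hrK : r * K ≤ c := by
      have : r ≤ c / K := min_le_right _ _
      calc r * K ≤ (c / K) * K := by nlinarith
        _ = c := by field_simp
    have := key r ⟨le_of_lt hr0, hr1⟩
    nlinarith

/-- Extraction from self-approaching polyline: the final point lies beyond the
perpendicular at `p 1` to the first segment. -/
lemma sa_endpoint (m : ℕ) (p : ℕ → EuclideanSpace ℝ (Fin 2))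
    (hsa : IsSelfApproachingPoly m p) (hm : 2 ≤ m) :
    (inner ℝ (p m - p 1) (p 0 - p 1) : ℝ) ≤ 0 := by
  apply innerG (p 0) (p 1) (p m)
  intro s hs
  have h := hsa 0 0 (m-1) s 1 1 (by omega) (by omega) (by omega) hs
    ⟨zero_le_one, le_refl 1⟩ ⟨zero_le_one, le_refl 1⟩
    (Or.inr ⟨rfl, hs.2⟩) (Or.inl (by omega))
  have hm1 : m - 1 + 1 = m := by omega
  simpa [polyPt, hm1] using h

open SimpleGraph Walk in
/-- Vertex-level extraction: on a self-approaching path `Q` from `s` to `w`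
with second vertex `y`, the endpoint satisfies the halfplane inequality. -/
lemma sa_path_second {V : Type*} {G : SimpleGraph V} {ρ : V → EuclideanSpace ℝ (Fin 2)}
    {s w : V} (Q : G.Walk s w)
    (hQsa : IsSelfApproachingPoly Q.length (fun n => ρ (Q.getVert n)))
    (y : V) (hy : Q.getVert 1 = y) (hlen : 2 ≤ Q.length) :
    (inner ℝ (ρ w - ρ y) (ρ s - ρ y) : ℝ) ≤ 0 := by
  have h := sa_endpoint Q.length (fun n => ρ (Q.getVert n)) hQsa hlen
  simpa [Walk.getVert_zero, Walk.getVert_length, hy] using h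

open SimpleGraph in
lemma tree_path_unique {V : Type*} {G : SimpleGraph V} (hT : G.IsTree) {x y : V}
    (P Q : G.Walk x y) (hP : P.IsPath) (hQ : Q.IsPath) : P = Q :=
  ((hT.existsUnique_path x y).unique hP hQ)

open SimpleGraph in
lemma tree_adj_path_eq {V : Type*} {G : SimpleGraph V} (hT : G.IsTree) {x y : V}
    (hxy : G.Adj x y) (P : G.Walk x y) (hP : P.IsPath) :
    P = Walk.cons hxy Walk.nil := by
  apply tree_path_unique hT P _ hP
  exact Walk.IsPath.nil.cons (by simpa using hxy.ne)

open SimpleGraph in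
lemma tree_second_eq {V : Type*} [DecidableEq V] {G : SimpleGraph V} (hT : G.IsTree) {u v w : V}
    (hvu : G.Adj v u) (Q : G.Walk v w) (hQ : Q.IsPath) (hu : u ∈ Q.support) :
    ∃ R : G.Walk u w, Q = Walk.cons hvu R := by
  refine ⟨Q.dropUntil u hu, ?_⟩
  have h1 : Q.takeUntil u hu = Walk.cons hvu Walk.nil :=
    tree_adj_path_eq hT hvu _ (hQ.takeUntil hu)
  conv_lhs => rw [← Q.take_spec hu]
  rw [h1]
  simp

open SimpleGraph in
lemma concat_path {V : Type*} {G : SimpleGraph V} {v a b : V}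
    (P : G.Walk v a) (hP : P.IsPath) (h : G.Adj a b) (hb : b ∉ P.support) :
    (P.concat h).IsPath := by
  rw [← Walk.isPath_reverse_iff, Walk.reverse_concat]
  exact hP.reverse.cons (by simpa [Walk.support_reverse] using hb)

open SimpleGraph in
lemma claimIv {V : Type*} {G : SimpleGraph V} (hT : G.IsTree)
    {ρ : V → EuclideanSpace ℝ (Fin 2)} (hρ : IsSelfApproachingDrawing G ρ)
    {u v : V} (huv : G.Adj u v) (w : V)
    (h : ∃ P : G.Walk v w, P.IsPath ∧ u ∉ P.support) :
    (inner ℝ (ρ w - ρ v) (ρ u - ρ v) : ℝ) ≤ 0 := by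
  by_cases hwv : w = v
  · subst hwv; simp
  obtain ⟨P, hP, hu⟩ := h
  have huw : u ≠ w := fun he => hu (he ▸ P.end_mem_support)
  obtain ⟨Q, hQp, hQsa⟩ := hρ.2 u w huw
  have hQeq : Q = Walk.cons huv P := tree_path_unique hT _ _ hQp (hP.cons hu)
  have hlen : 2 ≤ Q.length := by
    rw [hQeq, Walk.length_cons]
    rcases Nat.eq_zero_or_pos P.length with h0 | h0
    · exact absurd (Walk.eq_of_length_eq_zero h0).symm hwv
    · omega
  have hy : Q.getVert 1 = v := by
    rw [hQeq]
    simpa using Walk.getVert_cons_succ (n := 0) P huv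
  exact sa_path_second Q hQsa v hy hlen

open SimpleGraph in
lemma claimIu {V : Type*} [DecidableEq V] {G : SimpleGraph V} (hT : G.IsTree)
    {ρ : V → EuclideanSpace ℝ (Fin 2)} (hρ : IsSelfApproachingDrawing G ρ)
    {u v : V} (huv : G.Adj u v) (w : V)
    (h : ¬ ∃ P : G.Walk v w, P.IsPath ∧ u ∉ P.support) :
    (inner ℝ (ρ w - ρ u) (ρ v - ρ u) : ℝ) ≤ 0 := by
  by_cases hwu : w = u
  · subst hwu; simp
  have hwv : w ≠ v := by
    rintro rfl
    exact h ⟨Walk.nil, Walk.IsPath.nil, by simpa using huv.ne⟩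
  obtain ⟨Q, hQp, hQsa⟩ := hρ.2 v w (Ne.symm hwv)
  have hu : u ∈ Q.support := by
    by_contra hu
    exact h ⟨Q, hQp, hu⟩
  obtain ⟨R, hQeq⟩ := tree_second_eq hT huv.symm Q hQp hu
  have hlen : 2 ≤ Q.length := by
    rw [hQeq, Walk.length_cons]
    rcases Nat.eq_zero_or_pos R.length with h0 | h0
    · exact absurd (Walk.eq_of_length_eq_zero h0).symm hwu
    · omega
  have hy : Q.getVert 1 = u := by
    rw [hQeq]
    simpa using Walk.getVert_cons_succ (n := 0) R huv.symm
  exact sa_path_second Q hQsa u hy hlen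

open SimpleGraph in
lemma claimSide {V : Type*} [DecidableEq V] {G : SimpleGraph V} (hT : G.IsTree)
    {u v : V} (huv : G.Adj u v) {a b : V} (hab : G.Adj a b)
    (hne : ¬((a = u ∧ b = v) ∨ (a = v ∧ b = u)))
    (ha : ∃ P : G.Walk v a, P.IsPath ∧ u ∉ P.support) :
    ∃ P : G.Walk v b, P.IsPath ∧ u ∉ P.support := by
  obtain ⟨P, hP, hu⟩ := ha
  by_cases hb : b ∈ P.support
  · exact ⟨P.takeUntil b hb, hP.takeUntil hb,
      fun hmem => hu (Walk.support_takeUntil_subset P hb hmem)⟩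
  by_cases hbu : b = u
  · exfalso
    subst hbu
    have hcp : (P.concat hab).IsPath := concat_path P hP hab hu
    have heq := tree_adj_path_eq hT huv.symm (P.concat hab) hcp
    have hl := congrArg Walk.length heq
    rw [Walk.length_concat, Walk.length_cons, Walk.length_nil] at hl
    have hva : v = a := Walk.eq_of_length_eq_zero (p := P) (by omega)
    exact hne (Or.inr ⟨hva.symm, rfl⟩)
  · refine ⟨P.concat hab, concat_path P hP hab hb, ?_⟩
    rw [Walk.support_concat]
    simp only [List.concat_eq_append, List.mem_append, List.mem_singleton]
    rintro (h1 | h1)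
    · exact hu h1
    · exact hbu h1.symm

/-- In a self-approaching drawing of a finite tree, for every edge `{u, v}`, no other
edge's segment intersects the open slab of `{u, v}`; in particular no vertex image
lies in that slab. -/
theorem selfApproachingDrawing_tree_slab_empty
    {V : Type*} [Fintype V] (G : SimpleGraph V) (hT : G.IsTree)
    (ρ : V → EuclideanSpace ℝ (Fin 2)) (hρ : IsSelfApproachingDrawing G ρ) :
    (∀ u v a b : V, G.Adj u v → G.Adj a b →
      ¬((a = u ∧ b = v) ∨ (a = v ∧ b = u)) →
      Disjoint (segment ℝ (ρ a) (ρ b)) (slab (ρ u) (ρ v))) ∧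
    (∀ u v w : V, G.Adj u v → ρ w ∉ slab (ρ u) (ρ v)) := by
  classical
  have main2 : ∀ u v w : V, G.Adj u v → ρ w ∉ slab (ρ u) (ρ v) := by
    intro u v w huv hw
    obtain ⟨h1, h2⟩ := hw
    by_cases hc : ∃ P : G.Walk v w, P.IsPath ∧ u ∉ P.support
    · have := claimIv hT hρ huv w hc
      linarith
    · have := claimIu hT hρ huv w hc
      linarith
  refine ⟨?_, main2⟩
  intro u v a b huv hab hne
  have key : ((inner ℝ (ρ a - ρ u) (ρ v - ρ u) : ℝ) ≤ 0 ∧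
        (inner ℝ (ρ b - ρ u) (ρ v - ρ u) : ℝ) ≤ 0) ∨
      ((inner ℝ (ρ a - ρ v) (ρ u - ρ v) : ℝ) ≤ 0 ∧
        (inner ℝ (ρ b - ρ v) (ρ u - ρ v) : ℝ) ≤ 0) := by
    by_cases ha : ∃ P : G.Walk v a, P.IsPath ∧ u ∉ P.support
    · exact Or.inr ⟨claimIv hT hρ huv a ha,
        claimIv hT hρ huv b (claimSide hT huv hab hne ha)⟩
    · refine Or.inl ⟨claimIu hT hρ huv a ha, claimIu hT hρ huv b ?_⟩
      intro hb
      exact ha (claimSide hT huv hab.symm (by tauto) hb)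
  rw [Set.disjoint_left]
  rintro x hxseg hxslab
  obtain ⟨h1, h2⟩ := hxslab
  obtain ⟨c1, c2, hc1, hc2, hsum, hx⟩ := hxseg
  rcases key with ⟨ka, kb⟩ | ⟨ka, kb⟩
  · have hxe : x - ρ u = c1 • (ρ a - ρ u) + c2 • (ρ b - ρ u) := by
      have h' : c1 • (ρ a - ρ u) + c2 • (ρ b - ρ u)
          = (c1 • ρ a + c2 • ρ b) - (c1 + c2) • ρ u := by module
      rw [h', hsum, one_smul, hx]
    have hin : (inner ℝ (x - ρ u) (ρ v - ρ u) : ℝ)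
        = c1 * inner ℝ (ρ a - ρ u) (ρ v - ρ u) + c2 * inner ℝ (ρ b - ρ u) (ρ v - ρ u) := by
      rw [hxe, inner_add_left, real_inner_smul_left, real_inner_smul_left]
    nlinarith [mul_nonneg hc1 (neg_nonneg.mpr ka), mul_nonneg hc2 (neg_nonneg.mpr kb)]
  · have hxe : x - ρ v = c1 • (ρ a - ρ v) + c2 • (ρ b - ρ v) := by
      have h' : c1 • (ρ a - ρ v) + c2 • (ρ b - ρ v)
          = (c1 • ρ a + c2 • ρ b) - (c1 + c2) • ρ v := by module
      rw [h', hsum, one_smul, hx]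
    have hin : (inner ℝ (x - ρ v) (ρ u - ρ v) : ℝ)
        = c1 * inner ℝ (ρ a - ρ v) (ρ u - ρ v) + c2 * inner ℝ (ρ b - ρ v) (ρ u - ρ v) := by
      rw [hxe, inner_add_left, real_inner_smul_left, real_inner_smul_left]
    nlinarith [mul_nonneg hc1 (neg_nonneg.mpr ka), mul_nonneg hc2 (neg_nonneg.mpr kb)]
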